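/- Let e be an edge with endpoints s, t labeled by an integer m ≥ 3. The group presented with generators s, t, x, α₃, …, α_m and relations x = st, x = tα₃, x = α₃α₄, …, x = α_{i}α_{i+1}, …, x = α_m s is isomorphic to the dihedral Artin–Tits group ⟨s, t | stst⋯ = tsts⋯ (both sides of length m)⟩. -/

import Mathlib

/-- The alternating word s t s t ⋯ of given length in the free group. -/
def altWord {V : Type} : V → V → ℕ → FreeGroup V
  | _, _, 0 => 1
  | s, t, n + 1 => FreeGroup.of s * altWord t s n

/-- The Artin relations for an edge-labeling `m` (where `m s t = 0` or `1`
means no edge, and a label `m s t ≥ 2` imposes the braid relation). -/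
def artinRels {V : Type} (m : V → V → ℕ) : Set (FreeGroup V) :=
  { r | ∃ s t : V, 2 ≤ m s t ∧ r = altWord s t (m s t) * (altWord t s (m s t))⁻¹ }

/-- The Artin–Tits group of an edge-labeled graph, encoded by its labeling. -/
abbrev ArtinGroup {V : Type} (m : V → V → ℕ) : Type := PresentedGroup (artinRels m)

/-- The labeling of a single edge (on vertex set `Bool`) with label `m`. -/
def dihedralLabel (m : ℕ) : Bool → Bool → ℕ :=
  fun a b => if a = b then 0 else m

/-- Brady–McCammond relations for an edge labeled `m ≥ 3`: generators indexed by
`Fin (m + 1)`, with `0 ↦ s`, `1 ↦ t`, `2 ↦ x` and `i ↦ αᵢ` for `3 ≤ i ≤ m`.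
Relations: `x = s t`, `x = t α₃`, `x = αᵢ αᵢ₊₁` (`3 ≤ i ≤ m - 1`), `x = α_m s`. -/
def bmRels (m : ℕ) (hm : 3 ≤ m) : Set (FreeGroup (Fin (m + 1))) :=
  insert (FreeGroup.of 2 * (FreeGroup.of 0 * FreeGroup.of 1)⁻¹)
    (insert (FreeGroup.of 2 * (FreeGroup.of 1 * FreeGroup.of ⟨3, by omega⟩)⁻¹)
      (insert (FreeGroup.of 2 * (FreeGroup.of ⟨m, by omega⟩ * FreeGroup.of 0)⁻¹)
        { r | ∃ i : ℕ, ∃ h : 3 ≤ i ∧ i + 1 ≤ m,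
            r = FreeGroup.of 2 *
              (FreeGroup.of ⟨i, by omega⟩ * FreeGroup.of ⟨i + 1, by omega⟩)⁻¹ }))

namespace St11

variable {G : Type*} [Group G]

/-- Abstract alternating word `s t s t ⋯` in a group. -/
def altG : G → G → ℕ → G
  | _, _, 0 => 1
  | s, t, n + 1 => s * altG t s n

lemma hom_altWord {V : Type} {H : Type*} [Group H] (φ : FreeGroup V →* H) (s t : V) :
    ∀ n, φ (altWord s t n) = altG (φ (FreeGroup.of s)) (φ (FreeGroup.of t)) n := by
  intro n
  induction n generalizing s t with
  | zero => simp [altWord, altG]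
  | succ n ih => simp [altWord, altG, map_mul, ih]

lemma map_altG {H : Type*} [Group H] (φ : G →* H) (s t : G) :
    ∀ n, φ (altG s t n) = altG (φ s) (φ t) n := by
  intro n
  induction n generalizing s t with
  | zero => simp [altG]
  | succ n ih => simp [altG, map_mul, ih]

lemma altG_succ_right (s t : G) :
    ∀ n, altG s t (n + 1) = altG s t n * (if n % 2 = 0 then s else t) := by
  intro n
  induction n generalizing s t with
  | zero => simp [altG]
  | succ n ih =>
    have : altG s t (n + 2) = s * altG t s (n + 1) := rfl
    rw [this, ih t s]
    rcases Nat.mod_two_eq_zero_or_one n with h | h <;>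
      simp [h, Nat.add_mod, altG, mul_assoc]

/-- The sequence `α₂ = t`, `α_{k+1} = α_k⁻¹ x` with `x = s t`. -/
def aSeq (S T : G) : ℕ → G
  | 0 => T
  | n + 1 => (aSeq S T n)⁻¹ * (S * T)

lemma map_aSeq {H : Type*} [Group H] (φ : G →* H) (S T : G) :
    ∀ n, φ (aSeq S T n) = aSeq (φ S) (φ T) n := by
  intro n
  induction n with
  | zero => simp [aSeq]
  | succ n ih => simp [aSeq, ih]

lemma aSeq_closed (S T : G) : ∀ n, aSeq S T n =
    if n % 2 = 0 then (altG S T n)⁻¹ * altG T S (n + 1)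
    else (altG T S n)⁻¹ * altG S T (n + 1) := by
  intro n
  induction n with
  | zero => simp [aSeq, altG]
  | succ n ih =>
    rcases Nat.mod_two_eq_zero_or_one n with h | h
    · have h1 : (n + 1) % 2 = 1 := by omega
      rw [show aSeq S T (n+1) = (aSeq S T n)⁻¹ * (S * T) from rfl, ih]
      simp only [h, h1, if_pos rfl, one_ne_zero, if_neg (by omega : ¬(1:ℕ) = 0)]
      rw [altG_succ_right S T (n+1), altG_succ_right S T n]
      simp [h, h1, mul_assoc]
    · have h1 : (n + 1) % 2 = 0 := by omega
      rw [show aSeq S T (n+1) = (aSeq S T n)⁻¹ * (S * T) from rfl, ih]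
      simp only [h, h1, if_pos rfl, one_ne_zero, if_neg (by omega : ¬(1:ℕ) = 0)]
      rw [altG_succ_right T S (n+1), altG_succ_right T S n]
      simp [h, h1, mul_assoc]

lemma aSeq_mul_iff (S T : G) (n : ℕ) :
    aSeq S T n * S = S * T ↔ altG S T (n + 2) = altG T S (n + 2) := by
  rcases Nat.mod_two_eq_zero_or_one n with h | h
  · have h1 : (n + 1) % 2 = 1 := by omega
    rw [aSeq_closed, if_pos h,
      altG_succ_right S T (n+1), altG_succ_right S T n, altG_succ_right T S (n+1),
      if_pos h, if_neg (by omega : ¬(n+1) % 2 = 0), if_neg (by omega : ¬(n+1) % 2 = 0)]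
    rw [mul_assoc, inv_mul_eq_iff_eq_mul, mul_assoc (altG S T n)]
    exact eq_comm
  · have h1 : (n + 1) % 2 = 0 := by omega
    rw [aSeq_closed, if_neg (by omega : ¬ n % 2 = 0),
      altG_succ_right S T (n+1), altG_succ_right T S (n+1), altG_succ_right T S n,
      if_pos h1, if_pos h1, if_neg (by omega : ¬ n % 2 = 0)]
    rw [mul_assoc, inv_mul_eq_iff_eq_mul, mul_assoc (altG T S n)]

lemma mk_rel {α : Type} {rels : Set (FreeGroup α)} {r : FreeGroup α} (h : r ∈ rels) :
    PresentedGroup.mk rels r = 1 :=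
  (QuotientGroup.eq_one_iff _).mpr (Subgroup.subset_normalClosure h)

lemma mk_of {α : Type} (rels : Set (FreeGroup α)) (x : α) :
    PresentedGroup.mk rels (FreeGroup.of x) = PresentedGroup.of x := rfl

/-- The images of the Brady–McCammond generators, given `S` and `T`. -/
def fv (S T : G) : ℕ → G
  | 0 => S
  | 1 => T
  | 2 => S * T
  | n + 3 => aSeq S T (n + 1)

end St11

open St11

section Main

variable (m : ℕ) (hm : 3 ≤ m)

private lemma val0 : ((0 : Fin (m+1)) : ℕ) = 0 := rfl

private lemma val1 (hm : 3 ≤ m) : ((1 : Fin (m+1)) : ℕ) = 1 := by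
  show 1 % (m+1) = 1
  exact Nat.mod_eq_of_lt (by omega)

private lemma val2 (hm : 3 ≤ m) : ((2 : Fin (m+1)) : ℕ) = 2 := by
  show 2 % (m+1) = 2
  exact Nat.mod_eq_of_lt (by omega)

end Main

/-- The Brady–McCammond presentation with generators
s, t, x, α₃, …, α_m and relations x = st, x = tα₃, x = αᵢαᵢ₊₁, x = α_m s
presents the dihedral Artin–Tits group of label m. -/
theorem stmt_11 (m : ℕ) (hm : 3 ≤ m) :
    Nonempty (PresentedGroup (bmRels m hm) ≃* ArtinGroup (dihedralLabel m)) := by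
  classical
  -- Generators of the Artin group
  set S : ArtinGroup (dihedralLabel m) := PresentedGroup.of false with hS
  set T : ArtinGroup (dihedralLabel m) := PresentedGroup.of true with hT
  -- the braid relation in the Artin group
  have braid₂ : altG S T m = altG T S m := by
    have hd : dihedralLabel m false true = m := rfl
    have hmem : altWord false true m * (altWord true false m)⁻¹ ∈
        artinRels (dihedralLabel m) := ⟨false, true, by rw [hd]; omega, by rw [hd]⟩
    have h1 := mk_rel hmem
    rw [map_mul, map_inv, mul_inv_eq_one, hom_altWord, hom_altWord] at h1
    exact h1
  -- the map on Brady–McCammond generators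
  set f : Fin (m+1) → ArtinGroup (dihedralLabel m) := fun i => fv S T i.val with hf
  have e0 : f 0 = S := rfl
  have e1 : f 1 = T := by rw [hf]; simp only [val1 m hm]; rfl
  have e2 : f 2 = S * T := by rw [hf]; simp only [val2 m hm]; rfl
  have hfrel : ∀ r ∈ bmRels m hm, FreeGroup.lift f r = 1 := by
    intro r hr
    simp only [bmRels, Set.mem_insert_iff, Set.mem_setOf_eq] at hr
    rcases hr with rfl | rfl | rfl | ⟨i, ⟨h3, hi⟩, rfl⟩
    · simp only [map_mul, map_inv, FreeGroup.lift_apply_of, e0, e1, e2]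
      group
    · simp only [map_mul, map_inv, FreeGroup.lift_apply_of, e1, e2]
      have : f ⟨3, by omega⟩ = T⁻¹ * (S * T) := rfl
      rw [this]; group
    · simp only [map_mul, map_inv, FreeGroup.lift_apply_of, e0, e2]
      obtain ⟨n, rfl⟩ : ∃ n, m = n + 3 := ⟨m - 3, by omega⟩
      have hfm : f ⟨n + 3, by omega⟩ = aSeq S T (n + 1) := rfl
      rw [hfm, mul_inv_eq_one]
      have := (aSeq_mul_iff S T (n+1)).mpr braid₂
      rw [← this]
    · simp only [map_mul, map_inv, FreeGroup.lift_apply_of, e2]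
      obtain ⟨n, rfl⟩ : ∃ n, i = n + 3 := ⟨i - 3, by omega⟩
      have h1 : f ⟨n + 3, by omega⟩ = aSeq S T (n + 1) := rfl
      have h2 : f ⟨n + 3 + 1, by omega⟩ = aSeq S T (n + 2) := rfl
      rw [h1, h2, show aSeq S T (n + 2) = (aSeq S T (n+1))⁻¹ * (S * T) from rfl]
      group
  set φ : PresentedGroup (bmRels m hm) →* ArtinGroup (dihedralLabel m) :=
    PresentedGroup.toGroup hfrel with hφ
  -- Generators of the BM group
  set P : PresentedGroup (bmRels m hm) := PresentedGroup.of 0 with hP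
  set Q : PresentedGroup (bmRels m hm) := PresentedGroup.of 1 with hQ
  have gen2 : PresentedGroup.of (2 : Fin (m+1)) = P * Q := by
    have h1 := mk_rel (show (FreeGroup.of 2 * (FreeGroup.of 0 * FreeGroup.of 1)⁻¹ :
        FreeGroup (Fin (m+1))) ∈ bmRels m hm from Set.mem_insert _ _)
    rw [map_mul, map_inv, mul_inv_eq_one, map_mul] at h1
    simp only [mk_of] at h1
    exact h1
  have genAux : ∀ n (hn : n + 3 ≤ m),
      PresentedGroup.of (⟨n + 3, by omega⟩ : Fin (m+1)) = aSeq P Q (n + 1) := by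
    intro n
    induction n with
    | zero =>
      intro _
      have hmem : (FreeGroup.of 2 * (FreeGroup.of 1 * FreeGroup.of ⟨3, by omega⟩)⁻¹ :
          FreeGroup (Fin (m+1))) ∈ bmRels m hm :=
        Set.mem_insert_iff.mpr (Or.inr (Set.mem_insert _ _))
      have h1 := mk_rel hmem
      rw [map_mul, map_inv, mul_inv_eq_one, map_mul] at h1
      simp only [mk_of] at h1
      have h2 : (PresentedGroup.of (⟨3, by omega⟩ : Fin (m+1)) :
            PresentedGroup (bmRels m hm)) =
          Q⁻¹ * PresentedGroup.of (2 : Fin (m+1)) := by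
        rw [h1, hQ]; group
      rw [show ((⟨0 + 3, by omega⟩ : Fin (m+1))) = (⟨3, by omega⟩ : Fin (m+1)) from rfl,
        h2, gen2]
      show _ = (aSeq P Q 0)⁻¹ * (P * Q)
      rfl
    | succ n ih =>
      intro hle
      have hmem : (FreeGroup.of 2 *
          (FreeGroup.of ⟨n + 3, by omega⟩ * FreeGroup.of ⟨n + 3 + 1, by omega⟩)⁻¹ :
          FreeGroup (Fin (m+1))) ∈ bmRels m hm :=
        Set.mem_insert_iff.mpr (Or.inr (Set.mem_insert_iff.mpr (Or.inr (Or.inr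
          ⟨n + 3, ⟨by omega, by omega⟩, rfl⟩))))
      have h1 := mk_rel hmem
      rw [map_mul, map_inv, mul_inv_eq_one, map_mul] at h1
      simp only [mk_of] at h1
      have h2 : (PresentedGroup.of (⟨n + 3 + 1, by omega⟩ : Fin (m+1)) :
            PresentedGroup (bmRels m hm)) =
          (PresentedGroup.of (⟨n + 3, by omega⟩ : Fin (m+1)))⁻¹ *
            PresentedGroup.of (2 : Fin (m+1)) := by
        rw [h1]; group
      rw [show ((⟨n + 1 + 3, by omega⟩ : Fin (m+1))) = (⟨n + 3 + 1, by omega⟩ : Fin (m+1))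
        from rfl, h2, ih (by omega), gen2]
      rfl
  have braid₁ : altG P Q m = altG Q P m := by
    obtain ⟨n, hn⟩ : ∃ n, m = n + 3 := ⟨m - 3, by omega⟩
    subst hn
    have hmem : (FreeGroup.of 2 * (FreeGroup.of ⟨n + 3, by omega⟩ * FreeGroup.of 0)⁻¹ :
        FreeGroup (Fin (n + 3 + 1))) ∈ bmRels (n + 3) hm :=
      Set.mem_insert_iff.mpr (Or.inr (Set.mem_insert_iff.mpr (Or.inr
        (Set.mem_insert _ _))))
    have h1 := mk_rel hmem
    rw [map_mul, map_inv, mul_inv_eq_one, map_mul] at h1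
    simp only [mk_of] at h1
    rw [genAux n (by omega)] at h1
    rw [gen2] at h1
    exact (aSeq_mul_iff P Q (n + 1)).mp h1.symm
  -- the reverse map
  set g : Bool → PresentedGroup (bmRels m hm) := fun b => match b with
    | false => P
    | true => Q with hg
  have hgrel : ∀ r ∈ artinRels (dihedralLabel m), FreeGroup.lift g r = 1 := by
    rintro r ⟨s, t, hle, rfl⟩
    cases s <;> cases t
    · simp [dihedralLabel] at hle
    · have hd : dihedralLabel m false true = m := rfl
      rw [hd, map_mul, map_inv, mul_inv_eq_one, hom_altWord, hom_altWord]
      exact braid₁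
    · have hd : dihedralLabel m true false = m := rfl
      rw [hd, map_mul, map_inv, mul_inv_eq_one, hom_altWord, hom_altWord]
      exact braid₁.symm
    · simp [dihedralLabel] at hle
  set ψ : ArtinGroup (dihedralLabel m) →* PresentedGroup (bmRels m hm) :=
    PresentedGroup.toGroup hgrel with hψ
  have hψS : ψ S = P := PresentedGroup.toGroup.of hgrel
  have hψT : ψ T = Q := PresentedGroup.toGroup.of hgrel
  have hcomp1 : ψ.comp φ = MonoidHom.id _ := by
    apply PresentedGroup.ext
    intro x
    obtain ⟨v, hv⟩ := x
    rw [MonoidHom.comp_apply, MonoidHom.id_apply, hφ, PresentedGroup.toGroup.of]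
    rcases v with _ | _ | _ | n
    · show ψ S = PresentedGroup.of ⟨0, hv⟩
      rw [hψS]; rfl
    · show ψ T = PresentedGroup.of ⟨1, hv⟩
      rw [hψT]
      have : (⟨1, hv⟩ : Fin (m+1)) = (1 : Fin (m+1)) := by
        apply Fin.ext; rw [val1 m hm]
      rw [this]
    · show ψ (S * T) = PresentedGroup.of ⟨2, hv⟩
      rw [map_mul, hψS, hψT, ← gen2]
      have : (⟨2, hv⟩ : Fin (m+1)) = (2 : Fin (m+1)) := by
        apply Fin.ext; rw [val2 m hm]
      rw [this]
    · show ψ (aSeq S T (n + 1)) = PresentedGroup.of ⟨n + 3, hv⟩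
      rw [map_aSeq, hψS, hψT]
      exact (genAux n (by omega)).symm
  have hcomp2 : φ.comp ψ = MonoidHom.id _ := by
    apply PresentedGroup.ext
    intro b
    rw [MonoidHom.comp_apply, MonoidHom.id_apply, hψ, PresentedGroup.toGroup.of]
    cases b
    · show φ P = S
      rw [hP, hφ, PresentedGroup.toGroup.of]
      exact e0
    · show φ Q = T
      rw [hQ, hφ, PresentedGroup.toGroup.of]
      exact e1
  exact ⟨MonoidHom.toMulEquiv φ ψ hcomp1 hcomp2⟩
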